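/- For every ε with 0 < ε < √2·log 2, the equation g(δ, ε) = 0 has exactly one solution δ in the open interval (ε, 1). -/

import Mathlib

open MeasureTheory Real
/-- The function `g(δ,ε)` whose root determines the sharp dyadic parameter `δ⁺(ε)`. -/
noncomputable def g (δ ε : ℝ) : ℝ :=
  (1 - Real.sqrt (δ ^ 2 - ε ^ 2)) * Real.exp (Real.sqrt (δ ^ 2 - ε ^ 2)) *
      (2 - Real.exp (ε / Real.sqrt 2)) -
    (1 - δ) * Real.exp (δ - ε / Real.sqrt 2)

noncomputable def hAux (x : ℝ) : ℝ :=
  (1 - x) * Real.exp (x - x / Real.sqrt 2) + Real.exp (x / Real.sqrt 2) - 2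

lemma sqrt2_sq : (Real.sqrt 2) ^ 2 = 2 := Real.sq_sqrt (by norm_num)

lemma sqrt2_gt_one : 1 < Real.sqrt 2 := by
  have := Real.lt_sqrt (x := 1) (y := 2) (by norm_num)
  nlinarith [Real.sqrt_nonneg 2, sqrt2_sq]

noncomputable def DAux (x : ℝ) : ℝ :=
  Real.exp (x - x / Real.sqrt 2) * ((1 - 1 / Real.sqrt 2) * (1 - x) - 1)
    + (1 / Real.sqrt 2) * Real.exp (x / Real.sqrt 2)

lemma hAux_hasDerivAt (x : ℝ) : HasDerivAt hAux (DAux x) x := by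
  have hs2 : Real.sqrt 2 ≠ 0 := by positivity
  have h1 : HasDerivAt (fun x : ℝ => x - x / Real.sqrt 2) (1 - 1 / Real.sqrt 2) x := by
    simpa using (hasDerivAt_id x).fun_sub ((hasDerivAt_id x).div_const (Real.sqrt 2))
  have h2 : HasDerivAt (fun x : ℝ => Real.exp (x - x / Real.sqrt 2))
      (Real.exp (x - x / Real.sqrt 2) * (1 - 1 / Real.sqrt 2)) x := h1.exp
  have h3 : HasDerivAt (fun x : ℝ => (1 : ℝ) - x) (-1) x := by
    simpa using (hasDerivAt_const x (1:ℝ)).fun_sub (hasDerivAt_id x)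
  have h4 : HasDerivAt (fun x : ℝ => x / Real.sqrt 2) (1 / Real.sqrt 2) x := by
    simpa using (hasDerivAt_id x).div_const (Real.sqrt 2)
  have h5 : HasDerivAt (fun x : ℝ => Real.exp (x / Real.sqrt 2))
      (Real.exp (x / Real.sqrt 2) * (1 / Real.sqrt 2)) x := h4.exp
  have := ((h3.fun_mul h2).fun_add h5).sub_const 2
  exact this.congr_deriv (Eq.symm (by unfold DAux; ring))

lemma DAux_pos {x : ℝ} (hx : 0 < x) : 0 < DAux x := by
  have hs2 : (0:ℝ) < Real.sqrt 2 := by positivity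
  have hsq := sqrt2_sq
  have ht : (Real.sqrt 2 - 1) * x ≠ 0 := by
    have h := sqrt2_gt_one
    have : 0 < (Real.sqrt 2 - 1) * x := by nlinarith
    exact ne_of_gt this
  have key : (Real.sqrt 2 - 1) * x + 1 < Real.exp ((Real.sqrt 2 - 1) * x) :=
    Real.add_one_lt_exp ht
  have hexp : Real.exp (x / Real.sqrt 2) =
      Real.exp (x - x / Real.sqrt 2) * Real.exp ((Real.sqrt 2 - 1) * x) := by
    rw [← Real.exp_add]
    congr 1
    field_simp
    nlinarith [hsq]
  unfold DAux
  rw [hexp]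
  have hE : (0:ℝ) < Real.exp (x - x / Real.sqrt 2) := Real.exp_pos _
  have hkey2 : (1 - 1 / Real.sqrt 2) * (1 - x) - 1 + (1 / Real.sqrt 2) * Real.exp ((Real.sqrt 2 - 1) * x) > 0 := by
    have h0 : (1 / Real.sqrt 2) * ((Real.sqrt 2 - 1) * x + 1) <
        (1 / Real.sqrt 2) * Real.exp ((Real.sqrt 2 - 1) * x) := by
      apply mul_lt_mul_of_pos_left key (by positivity)
    have heq : (1 - 1 / Real.sqrt 2) * (1 - x) - 1 + (1 / Real.sqrt 2) * ((Real.sqrt 2 - 1) * x + 1) = 0 := by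
      field_simp
      nlinarith [hsq]
    linarith
  nlinarith [hkey2, hE]

lemma hAux_pos {x : ℝ} (hx : 0 < x) (hx1 : x ≤ 1) : 0 < hAux x := by
  have hc : ContinuousOn hAux (Set.Icc 0 1) := by
    intro y _
    exact (hAux_hasDerivAt y).continuousAt.continuousWithinAt
  have hmono : StrictMonoOn hAux (Set.Icc 0 1) := by
    apply strictMonoOn_of_deriv_pos (convex_Icc 0 1) hc
    intro y hy
    rw [interior_Icc] at hy
    rw [(hAux_hasDerivAt y).deriv]
    exact DAux_pos hy.1
  have h0 : hAux 0 = 0 := by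
    unfold hAux
    norm_num
  have := hmono (Set.mem_Icc.2 ⟨le_refl 0, by norm_num⟩) (Set.mem_Icc.2 ⟨hx.le, hx1⟩) hx
  linarith [h0 ▸ this]

noncomputable def F (ε δ : ℝ) : ℝ :=
  Real.log (1 - δ) + δ - Real.log (1 - Real.sqrt (δ ^ 2 - ε ^ 2)) - Real.sqrt (δ ^ 2 - ε ^ 2)

lemma sqrt_facts {ε δ : ℝ} (hε0 : 0 < ε) (hδ : ε < δ) :
    0 < Real.sqrt (δ ^ 2 - ε ^ 2) ∧ Real.sqrt (δ ^ 2 - ε ^ 2) < δ := by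
  have h1 : 0 < δ ^ 2 - ε ^ 2 := by nlinarith
  constructor
  · exact Real.sqrt_pos.2 h1
  · exact (Real.sqrt_lt' (by linarith : (0:ℝ) < δ)).2 (by nlinarith)

lemma F_hasDerivAt {ε δ : ℝ} (hε0 : 0 < ε) (hδ : ε < δ) (hδ1 : δ < 1) :
    HasDerivAt (F ε)
      (-1 / (1 - δ) + 1 + (δ / Real.sqrt (δ ^ 2 - ε ^ 2)) / (1 - Real.sqrt (δ ^ 2 - ε ^ 2))
        - δ / Real.sqrt (δ ^ 2 - ε ^ 2)) δ := by
  obtain ⟨hs0, hsδ⟩ := sqrt_facts hε0 hδ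
  set s := Real.sqrt (δ ^ 2 - ε ^ 2) with hs
  have hpos : 0 < δ ^ 2 - ε ^ 2 := by nlinarith
  have hq : HasDerivAt (fun x : ℝ => x ^ 2 - ε ^ 2) (2 * δ) δ := by
    simpa using (hasDerivAt_pow 2 δ).sub_const (ε ^ 2)
  have hsq : HasDerivAt (fun x : ℝ => Real.sqrt (x ^ 2 - ε ^ 2)) (δ / s) δ := by
    have := (Real.hasDerivAt_sqrt (ne_of_gt hpos)).comp δ hq
    exact this.congr_deriv (Eq.symm (by field_simp; ring))
  have hlog1 : HasDerivAt (fun x : ℝ => Real.log (1 - x)) (-1 / (1 - δ)) δ := by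
    have h3 : HasDerivAt (fun x : ℝ => (1 : ℝ) - x) (-1) δ := by
      simpa using (hasDerivAt_const δ (1:ℝ)).fun_sub (hasDerivAt_id δ)
    have := (Real.hasDerivAt_log (by linarith : (1:ℝ) - δ ≠ 0)).comp δ h3
    exact this.congr_deriv (Eq.symm (by field_simp))
  have h1ms : HasDerivAt (fun x : ℝ => 1 - Real.sqrt (x ^ 2 - ε ^ 2)) (-(δ / s)) δ := by
    simpa using (hasDerivAt_const δ (1:ℝ)).fun_sub hsq
  have hlog2 : HasDerivAt (fun x : ℝ => Real.log (1 - Real.sqrt (x ^ 2 - ε ^ 2)))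
      ((1 - s)⁻¹ * (-(δ / s))) δ := by
    have hne : (1:ℝ) - s ≠ 0 := by
      have : s < 1 := lt_trans hsδ hδ1
      linarith
    exact (Real.hasDerivAt_log hne).comp δ h1ms
  have := ((hlog1.fun_add (hasDerivAt_id δ)).fun_sub hlog2).fun_sub hsq
  exact this.congr_deriv (Eq.symm (by ring))

lemma F_strictAnti {ε : ℝ} (hε0 : 0 < ε) : StrictAntiOn (F ε) (Set.Ioo ε 1) := by
  apply strictAntiOn_of_deriv_neg (convex_Ioo ε 1)
  · intro y hy
    exact (F_hasDerivAt hε0 hy.1 hy.2).continuousAt.continuousWithinAt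
  · intro y hy
    rw [interior_Ioo] at hy
    obtain ⟨hy1, hy2⟩ := hy
    rw [(F_hasDerivAt hε0 hy1 hy2).deriv]
    obtain ⟨hs0, hsδ⟩ := sqrt_facts hε0 hy1
    set s := Real.sqrt (y ^ 2 - ε ^ 2) with hs
    have hs1 : s < 1 := lt_trans hsδ hy2
    have hy0 : 0 < y := lt_trans hε0 hy1
    have hsne : s ≠ 0 := ne_of_gt hs0
    have h1s : (1:ℝ) - s ≠ 0 := by linarith
    have h1y : (1:ℝ) - y ≠ 0 := by linarith
    have hV : -1 / (1 - y) + 1 + (y / s) / (1 - s) - y / s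
        = y * (s - y) / ((1 - s) * (1 - y)) := by
      field_simp
      ring
    rw [hV]
    apply div_neg_of_neg_of_pos
    · nlinarith
    · have : (0:ℝ) < 1 - s := by linarith
      have : (0:ℝ) < 1 - y := by linarith
      positivity

/-- For `0 < ε < √2 log 2`, the equation `g(δ,ε) = 0` has exactly one solution
`δ` in `(ε, 1)`. -/
theorem stmt16 (ε : ℝ) (hε0 : 0 < ε) (hε1 : ε < Real.sqrt 2 * Real.log 2) :
    ∃! δ : ℝ, δ ∈ Set.Ioo ε 1 ∧ g δ ε = 0 := by
  have hs2 : (0:ℝ) < Real.sqrt 2 := by positivity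
  have hsq := sqrt2_sq
  have hlog2 : Real.log 2 < 0.6931471808 := Real.log_two_lt_d9
  have hlog2' : (0:ℝ) < Real.log 2 := Real.log_pos (by norm_num)
  have hs2lt : Real.sqrt 2 < 1.41422 := by
    nlinarith [hsq, hs2]
  have hε1' : ε < 1 := by nlinarith
  have ha : Real.exp (ε / Real.sqrt 2) < 2 := by
    have h1 : ε / Real.sqrt 2 < Real.log 2 := by
      rw [div_lt_iff₀ hs2]
      nlinarith
    calc Real.exp (ε / Real.sqrt 2) < Real.exp (Real.log 2) := Real.exp_lt_exp.2 h1
      _ = 2 := Real.exp_log (by norm_num)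
  -- g ε ε < 0
  have gε_neg : g ε ε < 0 := by
    have hA := hAux_pos hε0 hε1'.le
    unfold hAux at hA
    unfold g
    rw [sub_self, Real.sqrt_zero, Real.exp_zero]
    nlinarith [hA]
  -- 0 < g 1 ε
  have g1_pos : 0 < g 1 ε := by
    unfold g
    have h1 : (1:ℝ) ^ 2 - ε ^ 2 < 1 := by nlinarith
    have h2 : (0:ℝ) ≤ 1 ^ 2 - ε ^ 2 := by nlinarith
    have hs1 : Real.sqrt (1 ^ 2 - ε ^ 2) < 1 := by
      exact (Real.sqrt_lt' one_pos).2 (by nlinarith)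
    have := Real.exp_pos (Real.sqrt ((1:ℝ) ^ 2 - ε ^ 2))
    have hmul : 0 < (1 - Real.sqrt ((1:ℝ) ^ 2 - ε ^ 2)) *
        Real.exp (Real.sqrt ((1:ℝ) ^ 2 - ε ^ 2)) * (2 - Real.exp (ε / Real.sqrt 2)) := by
      apply mul_pos (mul_pos (by linarith) this) (by linarith)
    simpa using hmul
  -- continuity
  have hgcont : ContinuousOn (fun δ => g δ ε) (Set.Icc ε 1) := by
    apply Continuous.continuousOn
    unfold g
    fun_prop
  -- existence via IVT
  have hmem : (0:ℝ) ∈ Set.Ioo (g ε ε) (g 1 ε) := ⟨gε_neg, g1_pos⟩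
  obtain ⟨δ, hδmem, hgδ⟩ := intermediate_value_Ioo hε1'.le hgcont hmem
  -- the key reformulation
  have keyF : ∀ y ∈ Set.Ioo ε 1, g y ε = 0 →
      F ε y = Real.log (2 - Real.exp (ε / Real.sqrt 2)) + ε / Real.sqrt 2 := by
    intro y hy hgy
    obtain ⟨hs0, hsy⟩ := sqrt_facts hε0 hy.1
    set s := Real.sqrt (y ^ 2 - ε ^ 2) with hsdef
    have hs1 : s < 1 := lt_trans hsy hy.2
    have h1s : (0:ℝ) < 1 - s := by linarith
    have h1y : (0:ℝ) < 1 - y := by linarith [hy.2]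
    have h2e : (0:ℝ) < 2 - Real.exp (ε / Real.sqrt 2) := by linarith
    unfold g at hgy
    have heq : (1 - s) * Real.exp s * (2 - Real.exp (ε / Real.sqrt 2))
        = (1 - y) * Real.exp (y - ε / Real.sqrt 2) := by
      rw [sub_eq_zero] at hgy
      exact hgy
    have hlogeq := congrArg Real.log heq
    rw [Real.log_mul (by positivity) (ne_of_gt h2e),
        Real.log_mul (ne_of_gt h1s) (Real.exp_ne_zero _),
        Real.log_exp,
        Real.log_mul (ne_of_gt h1y) (Real.exp_ne_zero _),
        Real.log_exp] at hlogeq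
    unfold F
    rw [← hsdef]
    linarith [hlogeq]
  refine ⟨δ, ⟨hδmem, hgδ⟩, ?_⟩
  rintro y ⟨hy, hgy⟩
  exact (F_strictAnti hε0).injOn hy hδmem (by rw [keyF y hy hgy, keyF δ hδmem hgδ])
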